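/- Let (W,w) be a Parseval fusion frame for H (i.e., S_{W,w} = Σ_i w_i² π_{W_i} = I_H) such that w_i² (dim W_i)^{1/2} = c for some constant c and every i = 1,…,m. Then T_{W,w} is the unique element of the set {A ∈ 𝔏_{T*_{W,w}} : max_{1≤i≤m} ‖A M_i T*_{W,w}‖_F = min_{B ∈ 𝔏_{T*_{W,w}}} max_{1≤i≤m} ‖B M_i T*_{W,w}‖_F}. -/

import Mathlib

noncomputable section

open scoped InnerProductSpace

variable {𝕜 : Type} [RCLike 𝕜]
variable {H : Type} [NormedAddCommGroup H] [InnerProductSpace 𝕜 H] [FiniteDimensional 𝕜 H]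
variable {m : ℕ}

/-- The Hilbert space `𝒲 = ⊕ᵢ Wᵢ` of a fusion sequence, with the ℓ² inner product. -/
abbrev FFSpace (W : Fin m → Submodule 𝕜 H) : Type := PiLp 2 (fun i => ↥(W i))

/-- The synthesis operator `T_{W,w} : 𝒲 → H`, `(fᵢ)ᵢ ↦ Σᵢ wᵢ fᵢ`. -/
def synthOp (W : Fin m → Submodule 𝕜 H) (w : Fin m → ℝ) : FFSpace W →ₗ[𝕜] H where
  toFun f := ∑ i, (w i : 𝕜) • (f i : H)
  map_add' f g := by
    simp [Finset.sum_add_distrib, smul_add]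
  map_smul' c f := by
    simp [Finset.smul_sum]
    congr 1; funext i; rw [smul_comm]

/-- The analysis operator `T*_{W,w} : H → 𝒲`, `f ↦ (wᵢ π_{Wᵢ} f)ᵢ`. -/
def analysisOp (W : Fin m → Submodule 𝕜 H) (w : Fin m → ℝ) : H →ₗ[𝕜] FFSpace W where
  toFun f := WithLp.toLp 2 (fun i => (w i : 𝕜) • (Submodule.orthogonalProjectionOnto (W i) f))
  map_add' f g := by
    ext i; simp [smul_add]
  map_smul' c f := by
    ext i; simp; rw [smul_comm]

/-- The coordinate operator `M_{J,W} : 𝒲 → 𝒲`, keeping the coordinates in `J`. -/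
def MJ (W : Fin m → Submodule 𝕜 H) (J : Finset (Fin m)) : FFSpace W →ₗ[𝕜] FFSpace W where
  toFun f := WithLp.toLp 2 (fun j => if j ∈ J then f j else 0)
  map_add' f g := by
    ext j; by_cases h : j ∈ J <;> simp [h]
  map_smul' c f := by
    ext j; by_cases h : j ∈ J <;> simp [h]

/-- `Q : 𝒲 → 𝒱` is block-diagonal if `Q M_{j,W} 𝒲 ⊆ M_{j,V} 𝒱` for all `j`. -/
def IsBlockDiagonal (W V : Fin m → Submodule 𝕜 H) (Q : FFSpace W →ₗ[𝕜] FFSpace V) : Prop :=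
  ∀ j, LinearMap.range (Q ∘ₗ MJ W {j}) ≤ LinearMap.range (MJ V {j})

/-- `Q : 𝒲 → 𝒱` is component preserving if `Q M_{j,W} 𝒲 = M_{j,V} 𝒱` for all `j`. -/
def IsComponentPreserving (W V : Fin m → Submodule 𝕜 H) (Q : FFSpace W →ₗ[𝕜] FFSpace V) : Prop :=
  ∀ j, LinearMap.range (Q ∘ₗ MJ W {j}) = LinearMap.range (MJ V {j})

/-- The orthogonal projection onto `U` as an endomorphism of `H`. -/
def projL (U : Submodule 𝕜 H) : H →ₗ[𝕜] H :=
  U.subtype ∘ₗ (Submodule.orthogonalProjectionOnto U : H →L[𝕜] U).toLinearMap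

/-- The fusion frame operator `S_{W,w} = Σᵢ wᵢ² π_{Wᵢ}`. -/
def fusionFrameOp (W : Fin m → Submodule 𝕜 H) (w : Fin m → ℝ) : H →ₗ[𝕜] H :=
  ∑ i, ((w i ^ 2 : ℝ) : 𝕜) • projL (W i)

/-- The squared Frobenius norm `‖B‖_F² = tr(B*B)` of a linear map between
finite-dimensional inner product spaces. -/
def frobSq {𝕜 : Type} [RCLike 𝕜] {E F : Type} [NormedAddCommGroup E] [InnerProductSpace 𝕜 E]
    [FiniteDimensional 𝕜 E] [NormedAddCommGroup F] [InnerProductSpace 𝕜 F]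
    [FiniteDimensional 𝕜 F] (B : E →ₗ[𝕜] F) : ℝ :=
  RCLike.re (LinearMap.trace 𝕜 E (LinearMap.adjoint B ∘ₗ B))

/-- The worst-case one-erasure error `max_i ‖A Mᵢ T*_{W,w}‖_F` of a reconstruction
operator `A : 𝒲 → H`. -/
def maxErr (W : Fin m → Submodule 𝕜 H) (w : Fin m → ℝ) (A : FFSpace W →L[𝕜] H) : ℝ :=
  ⨆ i : Fin m, Real.sqrt (frobSq ((A : FFSpace W →ₗ[𝕜] H) ∘ₗ MJ W {i} ∘ₗ analysisOp W w))

/-- The set of left inverses of `T*_{W,w}` minimizing the worst-case one-erasure error. -/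
def optimalSet (W : Fin m → Submodule 𝕜 H) (w : Fin m → ℝ) : Set (FFSpace W →L[𝕜] H) :=
  {A | A ∘L LinearMap.toContinuousLinearMap (analysisOp W w) = ContinuousLinearMap.id 𝕜 H ∧
    maxErr W w A =
      ⨅ B : {B : FFSpace W →L[𝕜] H //
          B ∘L LinearMap.toContinuousLinearMap (analysisOp W w) = ContinuousLinearMap.id 𝕜 H},
        maxErr W w ↑B}

section Aux
set_option linter.unusedSectionVars false
open Module

variable {𝕜 : Type} [RCLike 𝕜]


lemma trace_eq_sum_inner'' {E : Type} [NormedAddCommGroup E] [InnerProductSpace 𝕜 E]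
    [FiniteDimensional 𝕜 E] {ι : Type} [Fintype ι] [DecidableEq ι]
    (b : OrthonormalBasis ι 𝕜 E) (T : E →ₗ[𝕜] E) :
    LinearMap.trace 𝕜 E T = ∑ i, ⟪b i, T (b i)⟫_𝕜 := by
  rw [LinearMap.trace_eq_matrix_trace 𝕜 b.toBasis, Matrix.trace]
  congr 1; funext i
  rw [Matrix.diag_apply, LinearMap.toMatrix_apply, b.coe_toBasis_repr_apply, b.repr_apply_apply,
    b.coe_toBasis]

lemma frobSq_eq_sum {E F : Type} [NormedAddCommGroup E] [InnerProductSpace 𝕜 E]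
    [FiniteDimensional 𝕜 E] [NormedAddCommGroup F] [InnerProductSpace 𝕜 F]
    [FiniteDimensional 𝕜 F] {ι : Type} [Fintype ι] [DecidableEq ι]
    (b : OrthonormalBasis ι 𝕜 E) (B : E →ₗ[𝕜] F) :
    frobSq B = ∑ i, ‖B (b i)‖ ^ 2 := by
  rw [frobSq, trace_eq_sum_inner'' b, map_sum]
  congr 1; funext i
  rw [LinearMap.comp_apply, LinearMap.adjoint_inner_right, inner_self_eq_norm_sq]


variable {H : Type} [NormedAddCommGroup H] [InnerProductSpace 𝕜 H]

/-- Coordinate inclusion `W i → 𝒲`. -/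
def single' {m : ℕ} (W : Fin m → Submodule 𝕜 H) (i : Fin m) : ↥(W i) →ₗ[𝕜] FFSpace W :=
  (WithLp.linearEquiv 2 𝕜 (∀ j, ↥(W j))).symm.toLinearMap ∘ₗ
    LinearMap.single 𝕜 (fun j => ↥(W j)) i

lemma single'_apply {m : ℕ} (W : Fin m → Submodule 𝕜 H) (i : Fin m) (u : ↥(W i)) (j : Fin m) :
    single' W i u j = Pi.single (M := fun j => ↥(W j)) i u j := rfl

lemma MJ_single {m : ℕ} (W : Fin m → Submodule 𝕜 H) (i : Fin m) (x : FFSpace W) :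
    MJ W {i} x = single' W i (x i) := by
  refine PiLp.ext fun j => ?_
  show (if j ∈ ({i} : Finset (Fin m)) then x j else 0) = _
  rw [single'_apply]
  simp only [Finset.mem_singleton]
  by_cases h : j = i
  · subst h; rw [if_pos rfl, Pi.single_eq_same]
  · rw [if_neg h, Pi.single_eq_of_ne h]

lemma sum_MJ {m : ℕ} (W : Fin m → Submodule 𝕜 H) (x : FFSpace W) :
    ∑ i, MJ W {i} x = x := by
  refine PiLp.ext fun j => ?_
  have : (∑ i, MJ W {i} x) j = ∑ i, (MJ W {i} x) j := by rw [WithLp.ofLp_sum, Finset.sum_apply]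
  rw [this]
  show (∑ i, if j ∈ ({i} : Finset (Fin m)) then x j else 0) = x j
  simp only [Finset.mem_singleton]
  rw [Finset.sum_ite_eq Finset.univ j (fun _ => x j)]
  simp

variable [FiniteDimensional 𝕜 H]

lemma inner_orthogonalProjection_left_eq_right' (K : Submodule 𝕜 H) (u v : H) :
    ⟪(K.orthogonalProjectionOnto u : H), v⟫_𝕜 = ⟪u, (K.orthogonalProjectionOnto v : H)⟫_𝕜 :=
  K.inner_starProjection_left_eq_right u v

lemma sum_inner_comp {U : Submodule 𝕜 H} (B : ↥U →ₗ[𝕜] H)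
    {ι : Type} [Fintype ι] [DecidableEq ι] (e : OrthonormalBasis ι 𝕜 H) :
    ∑ j, ⟪e j, B (Submodule.orthogonalProjectionOnto U (e j))⟫_𝕜
      = ∑ k, ⟪((stdOrthonormalBasis 𝕜 ↥U) k : H), B ((stdOrthonormalBasis 𝕜 ↥U) k)⟫_𝕜 := by
  set f := stdOrthonormalBasis 𝕜 ↥U with hf
  have hπ : ∀ x : H, Submodule.orthogonalProjectionOnto U x = ∑ k, ⟪(f k : H), x⟫_𝕜 • f k := by
    intro x
    rw [← f.sum_repr' (Submodule.orthogonalProjectionOnto U x)]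
    refine Finset.sum_congr rfl fun k _ => ?_
    rw [Submodule.inner_orthogonalProjectionOnto_eq_of_mem_left]
  calc ∑ j, ⟪e j, B (Submodule.orthogonalProjectionOnto U (e j))⟫_𝕜
      = ∑ j, ∑ k, ⟪(f k : H), e j⟫_𝕜 * ⟪e j, B (f k)⟫_𝕜 := by
        refine Finset.sum_congr rfl fun j _ => ?_
        rw [hπ, map_sum, inner_sum]
        refine Finset.sum_congr rfl fun k _ => ?_
        rw [map_smul, inner_smul_right]
    _ = ∑ k, ∑ j, ⟪(f k : H), e j⟫_𝕜 * ⟪e j, B (f k)⟫_𝕜 := Finset.sum_comm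
    _ = ∑ k, ⟪((f k : H)), B (f k)⟫_𝕜 := by
        refine Finset.sum_congr rfl fun k _ => ?_
        exact e.sum_inner_mul_inner _ _

lemma sum_inner_proj_comp {U : Submodule 𝕜 H} (B : ↥U →ₗ[𝕜] H)
    {ι : Type} [Fintype ι] [DecidableEq ι] (e : OrthonormalBasis ι 𝕜 H) :
    ∑ j, ⟪e j, projL U (B (Submodule.orthogonalProjectionOnto U (e j)))⟫_𝕜
      = ∑ j, ⟪e j, B (Submodule.orthogonalProjectionOnto U (e j))⟫_𝕜 := by
  calc ∑ j, ⟪e j, projL U (B (Submodule.orthogonalProjectionOnto U (e j)))⟫_𝕜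
      = ∑ k, ⟪((stdOrthonormalBasis 𝕜 ↥U) k : H),
          (projL U ∘ₗ B) ((stdOrthonormalBasis 𝕜 ↥U) k)⟫_𝕜 := sum_inner_comp (projL U ∘ₗ B) e
    _ = ∑ k, ⟪((stdOrthonormalBasis 𝕜 ↥U) k : H),
          B ((stdOrthonormalBasis 𝕜 ↥U) k)⟫_𝕜 := by
        refine Finset.sum_congr rfl fun k _ => ?_
        set f := stdOrthonormalBasis 𝕜 ↥U
        show ⟪(f k : H), ((Submodule.orthogonalProjectionOnto U (B (f k))) : H)⟫_𝕜 = _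
        rw [← inner_orthogonalProjection_left_eq_right', Submodule.orthogonalProjectionOnto_mem_subspace_eq_self]
    _ = ∑ j, ⟪e j, B (Submodule.orthogonalProjectionOnto U (e j))⟫_𝕜 := (sum_inner_comp B e).symm

lemma sum_normSq_proj (U : Submodule 𝕜 H)
    {ι : Type} [Fintype ι] [DecidableEq ι] (e : OrthonormalBasis ι 𝕜 H) :
    ∑ j, ‖projL U (e j)‖ ^ 2 = (Module.finrank 𝕜 ↥U : ℝ) := by
  have h1 : ∀ j, (‖projL U (e j)‖ : ℝ) ^ 2 = RCLike.re ⟪e j, projL U (e j)⟫_𝕜 := by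
    intro j
    rw [← inner_self_eq_norm_sq (𝕜 := 𝕜)]
    congr 1
    show ⟪(Submodule.orthogonalProjectionOnto U (e j) : H), (Submodule.orthogonalProjectionOnto U (e j) : H)⟫_𝕜 = _
    rw [inner_orthogonalProjection_left_eq_right', Submodule.orthogonalProjectionOnto_mem_subspace_eq_self]
    rfl
  simp_rw [h1]
  rw [← map_sum]
  have h2 : ∑ j, ⟪e j, projL U (e j)⟫_𝕜
      = ∑ j, ⟪e j, (U.subtype : ↥U →ₗ[𝕜] H) (Submodule.orthogonalProjectionOnto U (e j))⟫_𝕜 := rfl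
  rw [h2, sum_inner_comp U.subtype e, map_sum]
  have h4 : ∀ k : Fin (Module.finrank 𝕜 ↥U),
      RCLike.re ⟪((stdOrthonormalBasis 𝕜 ↥U) k : H),
        (U.subtype : ↥U →ₗ[𝕜] H) ((stdOrthonormalBasis 𝕜 ↥U) k)⟫_𝕜 = 1 := by
    intro k
    have hn : ‖((stdOrthonormalBasis 𝕜 ↥U) k : H)‖ = 1 := by
      rw [show ‖((stdOrthonormalBasis 𝕜 ↥U) k : H)‖ = ‖(stdOrthonormalBasis 𝕜 ↥U) k‖ from rfl]
      exact (stdOrthonormalBasis 𝕜 ↥U).orthonormal.1 k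
    rw [show (U.subtype : ↥U →ₗ[𝕜] H) ((stdOrthonormalBasis 𝕜 ↥U) k)
        = ((stdOrthonormalBasis 𝕜 ↥U) k : H) from rfl, inner_self_eq_norm_sq, hn]
    norm_num
  simp_rw [h4]
  simp

variable {m : ℕ}

lemma synth_single (W : Fin m → Submodule 𝕜 H) (w : Fin m → ℝ) (i : Fin m) (u : ↥(W i)) :
    synthOp W w (single' W i u) = (w i : 𝕜) • (u : H) := by
  show ∑ j, (w j : 𝕜) • ((single' W i u j : H)) = _
  rw [Finset.sum_eq_single i]
  · rw [single'_apply, Pi.single_eq_same]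
  · intro j _ hj; rw [single'_apply, Pi.single_eq_of_ne hj]; simp
  · intro h; exact absurd (Finset.mem_univ i) h

/-- The one-erasure operator `A ∘ Mᵢ ∘ T*`. -/
def Gop (W : Fin m → Submodule 𝕜 H) (w : Fin m → ℝ) (A : FFSpace W →L[𝕜] H) (i : Fin m) :
    H →ₗ[𝕜] H :=
  (A : FFSpace W →ₗ[𝕜] H) ∘ₗ MJ W {i} ∘ₗ analysisOp W w

lemma maxErr_eq (W : Fin m → Submodule 𝕜 H) (w : Fin m → ℝ) (A : FFSpace W →L[𝕜] H) :
    maxErr W w A = ⨆ i : Fin m, Real.sqrt (frobSq (Gop W w A i)) := rfl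

lemma Gop_apply (W : Fin m → Submodule 𝕜 H) (w : Fin m → ℝ) (A : FFSpace W →L[𝕜] H)
    (i : Fin m) (f : H) :
    Gop W w A i f = (w i : 𝕜) • A (single' W i (Submodule.orthogonalProjectionOnto (W i) f)) := by
  show A (MJ W {i} (analysisOp W w f)) = _
  rw [MJ_single]
  show A (single' W i ((w i : 𝕜) • Submodule.orthogonalProjectionOnto (W i) f)) = _
  rw [map_smul, map_smul]

lemma Gop_synth (W : Fin m → Submodule 𝕜 H) (w : Fin m → ℝ) (i : Fin m) :
    Gop W w (LinearMap.toContinuousLinearMap (synthOp W w)) i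
      = ((w i ^ 2 : ℝ) : 𝕜) • projL (W i) := by
  ext f
  rw [Gop_apply]
  show (w i : 𝕜) • synthOp W w (single' W i (Submodule.orthogonalProjectionOnto (W i) f)) = _
  rw [synth_single, smul_smul,
    show ((w i : 𝕜) * (w i : 𝕜)) = ((w i ^ 2 : ℝ) : 𝕜) by push_cast; ring]
  rfl


lemma key_bound (W : Fin m → Submodule 𝕜 H) (w : Fin m → ℝ) (hw : ∀ i, 0 < w i)
    (hParseval : fusionFrameOp W w = LinearMap.id) (c : ℝ)
    (hc : ∀ i, w i ^ 2 * Real.sqrt (Module.finrank 𝕜 ↥(W i)) = c) (hm : 0 < m)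
    (A : FFSpace W →L[𝕜] H) (hA : ∀ f, A (analysisOp W w f) = f) :
    c ≤ maxErr W w A ∧
      (maxErr W w A ≤ c → A = LinearMap.toContinuousLinearMap (synthOp W w)) := by
  classical
  haveI : Nonempty (Fin m) := ⟨⟨0, hm⟩⟩
  have hc0 : 0 ≤ c := by rw [← hc ⟨0, hm⟩]; positivity
  set e := stdOrthonormalBasis 𝕜 H with he
  -- the "ideal" one-erasure operators
  set P : Fin m → (H →ₗ[𝕜] H) := fun i => ((w i ^ 2 : ℝ) : 𝕜) • projL (W i) with hP
  -- error operators
  set Ei : Fin m → (H →ₗ[𝕜] H) := fun i => Gop W w A i - P i with hEi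
  set τ : Fin m → ℝ := fun i => ∑ j, RCLike.re ⟪e j, Ei i (e j)⟫_𝕜 with hτ
  have hfrob_nonneg : ∀ B : H →ₗ[𝕜] H, 0 ≤ frobSq B := by
    intro B; rw [frobSq_eq_sum e]; positivity
  -- frobSq of the ideal operators
  have hfrobP : ∀ i, frobSq (P i) = c ^ 2 := by
    intro i
    rw [hP, frobSq_eq_sum e]
    have h1 : ∀ j, ‖(((w i ^ 2 : ℝ) : 𝕜) • projL (W i)) (e j)‖ ^ 2
        = (w i ^ 2) ^ 2 * ‖projL (W i) (e j)‖ ^ 2 := by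
      intro j
      rw [LinearMap.smul_apply, norm_smul, mul_pow, RCLike.norm_ofReal,
        abs_of_nonneg (sq_nonneg _)]
    simp_rw [h1]
    rw [← Finset.mul_sum, sum_normSq_proj (W i) e, ← hc i, mul_pow,
      Real.sq_sqrt (by positivity)]
  -- sum of the one-erasure operators is the identity
  have hsumG : ∀ f : H, ∑ i, Gop W w A i f = f := by
    intro f
    have h1 : ∑ i, Gop W w A i f = A (∑ i, MJ W {i} (analysisOp W w f)) := by
      rw [map_sum]
      exact Finset.sum_congr rfl fun i _ => rfl
    rw [h1, sum_MJ, hA]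
  have hsumP : ∀ f : H, ∑ i, P i f = f := by
    intro f
    rw [← LinearMap.sum_apply, hP]
    rw [show (∑ i, ((w i ^ 2 : ℝ) : 𝕜) • projL (W i)) = fusionFrameOp W w from rfl, hParseval]
    rfl
  have hsumEi : ∀ f : H, ∑ i, Ei i f = 0 := by
    intro f
    simp only [hEi, LinearMap.sub_apply, Finset.sum_sub_distrib, hsumG f, hsumP f, sub_self]
  have hτsum : ∑ i, τ i = 0 := by
    rw [hτ, Finset.sum_comm]
    have : ∀ j, ∑ i, RCLike.re ⟪e j, Ei i (e j)⟫_𝕜 = 0 := by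
      intro j
      rw [← map_sum, ← inner_sum, hsumEi, inner_zero_right, map_zero]
    simp [this]
  -- the factorization of Eᵢ through the orthogonal projection
  have hEfact : ∀ i, ∃ B : ↥(W i) →ₗ[𝕜] H, ∀ x : H, Ei i x = B (Submodule.orthogonalProjectionOnto (W i) x) := by
    intro i
    refine ⟨((w i : 𝕜) • ((A : FFSpace W →ₗ[𝕜] H) ∘ₗ single' W i))
      - (((w i ^ 2 : ℝ) : 𝕜) • (W i).subtype), fun x => ?_⟩
    simp only [hEi, hP, LinearMap.sub_apply, LinearMap.smul_apply, LinearMap.comp_apply]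
    rw [Gop_apply]
    rfl
  -- the cross term
  have hcross : ∀ i, ∑ j, RCLike.re ⟪P i (e j), Ei i (e j)⟫_𝕜 = (w i) ^ 2 * τ i := by
    intro i
    obtain ⟨B, hB⟩ := hEfact i
    have h1 : ∀ j, RCLike.re ⟪P i (e j), Ei i (e j)⟫_𝕜
        = (w i) ^ 2 * RCLike.re ⟪e j, projL (W i) (Ei i (e j))⟫_𝕜 := by
      intro j
      rw [hP]
      show RCLike.re ⟪((w i ^ 2 : ℝ) : 𝕜) • projL (W i) (e j), Ei i (e j)⟫_𝕜 = _
      rw [inner_smul_left, RCLike.conj_ofReal]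
      rw [show (projL (W i) (e j) : H) = ((Submodule.orthogonalProjectionOnto (W i) (e j) : H)) from rfl,
        inner_orthogonalProjection_left_eq_right']
      rw [show ⟪e j, ((Submodule.orthogonalProjectionOnto (W i) (Ei i (e j))) : H)⟫_𝕜
          = ⟪e j, projL (W i) (Ei i (e j))⟫_𝕜 from rfl]
      rw [RCLike.re_ofReal_mul]
    simp_rw [h1]
    rw [← Finset.mul_sum]
    congr 1
    have h2 : ∑ j, ⟪e j, projL (W i) (Ei i (e j))⟫_𝕜 = ∑ j, ⟪e j, Ei i (e j)⟫_𝕜 := by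
      calc ∑ j, ⟪e j, projL (W i) (Ei i (e j))⟫_𝕜
          = ∑ j, ⟪e j, projL (W i) (B (Submodule.orthogonalProjectionOnto (W i) (e j)))⟫_𝕜 :=
            Finset.sum_congr rfl fun j _ => by rw [hB]
        _ = ∑ j, ⟪e j, B (Submodule.orthogonalProjectionOnto (W i) (e j))⟫_𝕜 := sum_inner_proj_comp B e
        _ = ∑ j, ⟪e j, Ei i (e j)⟫_𝕜 := Finset.sum_congr rfl fun j _ => by rw [hB]
    simp only [hτ]
    have h3 : ∀ v : Fin (Module.finrank 𝕜 H) → 𝕜,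
        ∑ j, RCLike.re (v j) = RCLike.re (∑ j, v j) := fun v => (map_sum _ _ _).symm
    rw [h3, h3, h2]
  -- decomposition of the error
  have hdecomp : ∀ i, frobSq (Gop W w A i) = c ^ 2 + (2 * (w i) ^ 2 * τ i + frobSq (Ei i)) := by
    intro i
    have hsplit : ∀ j, ‖Gop W w A i (e j)‖ ^ 2
        = ‖P i (e j)‖ ^ 2 + 2 * RCLike.re ⟪P i (e j), Ei i (e j)⟫_𝕜 + ‖Ei i (e j)‖ ^ 2 := by
      intro j
      have : Gop W w A i (e j) = P i (e j) + Ei i (e j) := by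
        rw [hEi]; simp
      rw [this, norm_add_sq (𝕜 := 𝕜)]
    rw [frobSq_eq_sum e]
    simp_rw [hsplit]
    rw [Finset.sum_add_distrib, Finset.sum_add_distrib, ← Finset.mul_sum, hcross i,
      ← frobSq_eq_sum e (P i), ← frobSq_eq_sum e (Ei i), hfrobP i]
    ring
  have hbdd : BddAbove (Set.range fun i : Fin m => Real.sqrt (frobSq (Gop W w A i))) :=
    Set.Finite.bddAbove (Set.finite_range _)
  constructor
  · -- lower bound
    obtain ⟨i, hi⟩ : ∃ i, 0 ≤ τ i := by
      by_contra h
      push_neg at h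
      have := Finset.sum_lt_sum_of_nonempty Finset.univ_nonempty
        (g := fun _ => (0 : ℝ)) (fun i _ => h i)
      rw [hτsum] at this
      simp at this
    have h1 : c ^ 2 ≤ frobSq (Gop W w A i) := by
      have h2 := hfrob_nonneg (Ei i)
      have h3 : 0 ≤ 2 * (w i) ^ 2 * τ i := by positivity
      rw [hdecomp i]; linarith
    have h4 : c ≤ Real.sqrt (frobSq (Gop W w A i)) := by
      have := Real.sqrt_le_sqrt h1
      rwa [Real.sqrt_sq hc0] at this
    exact le_trans h4 (le_ciSup hbdd i)
  · -- uniqueness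
    intro hle
    have hfrob_le : ∀ i, frobSq (Gop W w A i) ≤ c ^ 2 := by
      intro i
      have h1 : Real.sqrt (frobSq (Gop W w A i)) ≤ c :=
        le_trans (le_ciSup hbdd i) hle
      have h2 := Real.sq_sqrt (hfrob_nonneg (Gop W w A i))
      calc frobSq (Gop W w A i) = Real.sqrt (frobSq (Gop W w A i)) ^ 2 := h2.symm
        _ ≤ c ^ 2 := by
          have h3 := Real.sqrt_nonneg (frobSq (Gop W w A i))
          nlinarith
    have hquad : ∀ i, 2 * (w i) ^ 2 * τ i + frobSq (Ei i) ≤ 0 := by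
      intro i
      have := hfrob_le i
      rw [hdecomp i] at this
      linarith
    have hτnonpos : ∀ i, τ i ≤ 0 := by
      intro i
      have h1 := hquad i
      have h2 := hfrob_nonneg (Ei i)
      nlinarith [hw i, sq_nonneg (w i), mul_pos (hw i) (hw i)]
    have hτzero : ∀ i, τ i = 0 := by
      intro i
      exact (Finset.sum_eq_zero_iff_of_nonpos (fun i _ => hτnonpos i)).1 hτsum i
        (Finset.mem_univ i)
    have hEzero : ∀ i, Ei i = 0 := by
      intro i
      have h1 : frobSq (Ei i) ≤ 0 := by have := hquad i; rw [hτzero i] at this; linarith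
      have h2 : frobSq (Ei i) = 0 := le_antisymm h1 (hfrob_nonneg _)
      rw [frobSq_eq_sum e] at h2
      have h3 : ∀ j ∈ Finset.univ, ‖Ei i (e j)‖ ^ 2 = 0 := by
        rw [← Finset.sum_eq_zero_iff_of_nonneg (fun j _ => by positivity)]
        exact h2
      apply Module.Basis.ext e.toBasis
      intro j
      have := h3 j (Finset.mem_univ j)
      rw [e.coe_toBasis]
      simp only [LinearMap.zero_apply]
      rwa [pow_eq_zero_iff (by norm_num), norm_eq_zero] at this
    have hGP : ∀ i, Gop W w A i = P i := by
      intro i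
      have := hEzero i
      rw [hEi, sub_eq_zero] at this
      exact this
    -- conclude A = T
    ext x
    have hx : x = ∑ i, MJ W {i} x := (sum_MJ W x).symm
    rw [show A x = A (∑ i, MJ W {i} x) from by rw [← hx],
      show LinearMap.toContinuousLinearMap (synthOp W w) x
        = LinearMap.toContinuousLinearMap (synthOp W w) (∑ i, MJ W {i} x) from by rw [← hx],
      map_sum, map_sum]
    refine Finset.sum_congr rfl fun i _ => ?_
    -- realize M_i x as M_i (T* y)
    set u := x i with hu
    set y : H := (((w i)⁻¹ : ℝ) : 𝕜) • (u : H) with hy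
    have hπy : MJ W {i} (analysisOp W w y) = MJ W {i} x := by
      rw [MJ_single, MJ_single]
      congr 1
      show (w i : 𝕜) • Submodule.orthogonalProjectionOnto (W i) y = u
      rw [hy, map_smul, Submodule.orthogonalProjectionOnto_mem_subspace_eq_self, smul_smul]
      rw [show ((w i : 𝕜) * (((w i)⁻¹ : ℝ) : 𝕜)) = 1 by
        have hne : ((w i : ℝ) : 𝕜) ≠ 0 := RCLike.ofReal_ne_zero.mpr (ne_of_gt (hw i))
        push_cast
        rw [mul_inv_cancel₀ hne]]
      simp
    calc A (MJ W {i} x) = A (MJ W {i} (analysisOp W w y)) := by rw [hπy]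
      _ = Gop W w A i y := rfl
      _ = P i y := by rw [hGP i]
      _ = Gop W w (LinearMap.toContinuousLinearMap (synthOp W w)) i y := by rw [Gop_synth]
      _ = LinearMap.toContinuousLinearMap (synthOp W w) (MJ W {i} (analysisOp W w y)) := rfl
      _ = LinearMap.toContinuousLinearMap (synthOp W w) (MJ W {i} x) := by rw [hπy]

end Aux




/-- if `(W,w)` is a Parseval fusion frame with `wᵢ² (dim Wᵢ)^{1/2} = c` for
every `i`, then `T_{W,w}` is the unique left inverse of `T*_{W,w}` minimizing the
worst-case one-erasure error. -/
theorem parseval_unique_optimal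
    {𝕜 : Type} [RCLike 𝕜] {H : Type} [NormedAddCommGroup H] [InnerProductSpace 𝕜 H]
    [FiniteDimensional 𝕜 H] {m : ℕ}
    (W : Fin m → Submodule 𝕜 H) (w : Fin m → ℝ) (hw : ∀ i, 0 < w i) (hW : ⨆ i, W i = ⊤)
    (hParseval : fusionFrameOp W w = LinearMap.id)
    (c : ℝ) (hc : ∀ i, w i ^ 2 * Real.sqrt (Module.finrank 𝕜 ↥(W i)) = c) :
    optimalSet W w = {LinearMap.toContinuousLinearMap (synthOp W w)} := by
  classical
  have hTleft : ∀ f : H, synthOp W w (analysisOp W w f) = f := by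
    intro f
    have h1 : synthOp W w (analysisOp W w f) = fusionFrameOp W w f := by
      show ∑ j, (w j : 𝕜) • ((analysisOp W w f j : H)) = _
      rw [fusionFrameOp, LinearMap.sum_apply]
      refine Finset.sum_congr rfl fun j _ => ?_
      show (w j : 𝕜) • ((w j : 𝕜) • ((Submodule.orthogonalProjectionOnto (W j) f : H))) = _
      rw [LinearMap.smul_apply, smul_smul,
        show ((w j : 𝕜) * (w j : 𝕜)) = ((w j ^ 2 : ℝ) : 𝕜) by push_cast; ring]
      rfl
    rw [h1, hParseval]
    rfl
  have hTcleft : LinearMap.toContinuousLinearMap (synthOp W w)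
      ∘L LinearMap.toContinuousLinearMap (analysisOp W w) = ContinuousLinearMap.id 𝕜 H := by
    ext f
    exact hTleft f
  rcases Nat.eq_zero_or_pos m with hm | hm
  · -- degenerate case `m = 0`: `H` is trivial
    subst hm
    have hzero : ∀ x : H, x = 0 := by
      intro x
      have h1 : (⨆ i : Fin 0, W i) = ⊥ := iSup_of_empty _
      have h2 : x ∈ (⊤ : Submodule 𝕜 H) := Submodule.mem_top
      rw [← hW, h1, Submodule.mem_bot] at h2
      exact h2
    have hfe : ∀ B C : FFSpace W →L[𝕜] H, B = C := by
      intro B C; ext z; rw [hzero (B z), hzero (C z)]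
    have hme : ∀ B : FFSpace W →L[𝕜] H, maxErr W w B = 0 := by
      intro B
      exact Real.iSup_of_isEmpty _
    haveI hne : Nonempty {B : FFSpace W →L[𝕜] H //
        B ∘L LinearMap.toContinuousLinearMap (analysisOp W w) = ContinuousLinearMap.id 𝕜 H} :=
      ⟨⟨LinearMap.toContinuousLinearMap (synthOp W w), hTcleft⟩⟩
    ext A
    simp only [optimalSet, Set.mem_setOf_eq, Set.mem_singleton_iff]
    constructor
    · intro _; exact hfe A _
    · rintro rfl
      refine ⟨hTcleft, ?_⟩
      rw [hme]
      symm
      simp_rw [hme]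
      exact ciInf_const
  · -- main case
    haveI : Nonempty (Fin m) := ⟨⟨0, hm⟩⟩
    have hc0 : 0 ≤ c := by rw [← hc ⟨0, hm⟩]; positivity
    have key := key_bound W w hw hParseval c hc hm
    -- the synthesis operator achieves the value `c`
    have hfrobP : ∀ i, frobSq (((w i ^ 2 : ℝ) : 𝕜) • projL (W i)) = c ^ 2 := by
      intro i
      set e := stdOrthonormalBasis 𝕜 H
      rw [frobSq_eq_sum e]
      have h1 : ∀ j, ‖(((w i ^ 2 : ℝ) : 𝕜) • projL (W i)) (e j)‖ ^ 2
          = (w i ^ 2) ^ 2 * ‖projL (W i) (e j)‖ ^ 2 := by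
        intro j
        rw [LinearMap.smul_apply, norm_smul, mul_pow, RCLike.norm_ofReal,
          abs_of_nonneg (sq_nonneg _)]
      simp_rw [h1]
      rw [← Finset.mul_sum, sum_normSq_proj (W i) e, ← hc i, mul_pow,
        Real.sq_sqrt (by positivity)]
    have hTc_max : maxErr W w (LinearMap.toContinuousLinearMap (synthOp W w)) = c := by
      rw [maxErr_eq]
      have h1 : ∀ i : Fin m,
          Real.sqrt (frobSq (Gop W w (LinearMap.toContinuousLinearMap (synthOp W w)) i)) = c := by
        intro i
        rw [Gop_synth, hfrobP i, Real.sqrt_sq hc0]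
      simp_rw [h1]
      exact ciSup_const
    haveI hne : Nonempty {B : FFSpace W →L[𝕜] H //
        B ∘L LinearMap.toContinuousLinearMap (analysisOp W w) = ContinuousLinearMap.id 𝕜 H} :=
      ⟨⟨LinearMap.toContinuousLinearMap (synthOp W w), hTcleft⟩⟩
    have hinv : ∀ B : {B : FFSpace W →L[𝕜] H //
        B ∘L LinearMap.toContinuousLinearMap (analysisOp W w) = ContinuousLinearMap.id 𝕜 H},
        ∀ f, (B : FFSpace W →L[𝕜] H) (analysisOp W w f) = f := by
      intro B f
      have := congrArg (fun (Φ : H →L[𝕜] H) => Φ f) B.2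
      exact this
    have hinf : (⨅ B : {B : FFSpace W →L[𝕜] H //
        B ∘L LinearMap.toContinuousLinearMap (analysisOp W w) = ContinuousLinearMap.id 𝕜 H},
        maxErr W w ↑B) = c := by
      refine le_antisymm ?_ (le_ciInf fun B => (key ↑B (hinv B)).1)
      have h2 := ciInf_le (f := fun B : {B : FFSpace W →L[𝕜] H //
          B ∘L LinearMap.toContinuousLinearMap (analysisOp W w) = ContinuousLinearMap.id 𝕜 H} =>
          maxErr W w ↑B)
        ⟨c, by rintro x ⟨B, rfl⟩; exact (key ↑B (hinv B)).1⟩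
        ⟨LinearMap.toContinuousLinearMap (synthOp W w), hTcleft⟩
      rw [hTc_max] at h2
      exact h2
    ext A
    simp only [optimalSet, Set.mem_setOf_eq, Set.mem_singleton_iff]
    constructor
    · rintro ⟨hA1, hA2⟩
      refine (key A (fun f => ?_)).2 ?_
      · exact congrArg (fun (Φ : H →L[𝕜] H) => Φ f) hA1
      · rw [hA2, hinf]
    · rintro rfl
      exact ⟨hTcleft, by rw [hTc_max, hinf]⟩
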